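/- For all integers n ≥ 1 and d ≥ 1 and every integer s with 1 ≤ s ≤ n, setting Δ = min(⌈2s/3⌉, ⌈30·((s·ln 2)/d + ln n)⌉), there exists an assignment N that gives each of n vertices v_1, …, v_n a set N(v_i) of exactly Δ elements of a fixed s-element set Q, such that for every subset B ⊆ Q with |B| < s/3, the number of indices i ∈ {1,…,n} with |N(v_i) ∩ B| ≥ Δ/2 is strictly less than d. -/

import Mathlib

open scoped Classical

open Finset

private lemma descFactorial_mul_pow_le (b s : ℕ) (hbs : b ≤ s) :
    ∀ j, b.descFactorial j * s ^ j ≤ s.descFactorial j * b ^ j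
  | 0 => by simp
  | (j+1) => by
      have IH := descFactorial_mul_pow_le b s hbs j
      have hkey : (b - j) * s ≤ (s - j) * b := by
        rw [Nat.sub_mul, Nat.sub_mul]
        have h1 : j * b ≤ j * s := Nat.mul_le_mul_left j hbs
        have h2 : b * s - j * s ≤ b * s - j * b := Nat.sub_le_sub_left h1 _
        calc b * s - j * s ≤ b * s - j * b := h2
          _ = s * b - j * b := by rw [Nat.mul_comm b s]
      rw [Nat.descFactorial_succ, Nat.descFactorial_succ, pow_succ, pow_succ]
      calc (b - j) * b.descFactorial j * (s ^ j * s)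
          = ((b - j) * s) * (b.descFactorial j * s ^ j) := by ring
        _ ≤ ((s - j) * b) * (s.descFactorial j * b ^ j) := Nat.mul_le_mul hkey IH
        _ = (s - j) * s.descFactorial j * (b ^ j * b) := by ring

private lemma choose_mul_pow_le (b s j : ℕ) (hbs : b ≤ s) :
    b.choose j * s ^ j ≤ s.choose j * b ^ j := by
  have h := descFactorial_mul_pow_le b s hbs j
  rw [Nat.descFactorial_eq_factorial_mul_choose, Nat.descFactorial_eq_factorial_mul_choose] at h
  have hfac : 0 < Nat.factorial j := Nat.factorial_pos j
  have : Nat.factorial j * (b.choose j * s ^ j) ≤ Nat.factorial j * (s.choose j * b ^ j) := by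
    calc Nat.factorial j * (b.choose j * s ^ j) = Nat.factorial j * b.choose j * s ^ j := by ring
      _ ≤ Nat.factorial j * s.choose j * b ^ j := h
      _ = Nat.factorial j * (s.choose j * b ^ j) := by ring
  exact Nat.le_of_mul_le_mul_left this hfac

private lemma card_superset_filter_le {α : Type*} [DecidableEq α] (u S : Finset α)
    (hSu : S ⊆ u) (Δ : ℕ) :
    ((Finset.powersetCard Δ u).filter (fun A => S ⊆ A)).card
      ≤ (u.card - S.card).choose (Δ - S.card) := by
  have hle : ((Finset.powersetCard Δ u).filter (fun A => S ⊆ A)).card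
      ≤ ((u \ S).powersetCard (Δ - S.card)).card := by
    apply Finset.card_le_card_of_injOn (fun A => A \ S)
    · intro A hA
      simp only [mem_coe, mem_filter, mem_powersetCard] at hA
      obtain ⟨⟨hAu, hAcard⟩, hSA⟩ := hA
      rw [mem_coe, mem_powersetCard]
      refine ⟨sdiff_subset_sdiff hAu (Finset.Subset.refl S), ?_⟩
      rw [card_sdiff_of_subset hSA, hAcard]
    · intro A1 h1 A2 h2 h
      simp only [coe_filter, Set.mem_setOf_eq, mem_powersetCard] at h1 h2
      have e1 : A1 \ S ∪ S = A1 := sdiff_union_of_subset h1.2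
      have e2 : A2 \ S ∪ S = A2 := sdiff_union_of_subset h2.2
      rw [← e1, ← e2]
      exact congrArg (fun X => X ∪ S) h
  rwa [card_powersetCard, card_sdiff_of_subset hSu] at hle

private lemma sum_two_pow_inter_le {α : Type*} [DecidableEq α] (u B : Finset α)
    (hBu : B ⊆ u) (Δ : ℕ) :
    ∑ A ∈ Finset.powersetCard Δ u, 2 ^ (A ∩ B).card
      ≤ ∑ j ∈ Finset.range (Δ + 1), B.card.choose j * (u.card - j).choose (Δ - j) := by
  have step1 : ∀ A ∈ Finset.powersetCard Δ u,
      (2:ℕ) ^ (A ∩ B).card = ∑ S ∈ B.powerset, if S ⊆ A then 1 else 0 := by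
    intro A _
    have h1 : (A ∩ B).powerset = B.powerset.filter (fun S => S ⊆ A) := by
      ext S
      simp only [mem_powerset, mem_filter, Finset.subset_inter_iff]
      tauto
    rw [← Finset.card_powerset, h1, Finset.card_filter]
  have step2 : ∑ A ∈ Finset.powersetCard Δ u, 2 ^ (A ∩ B).card
      = ∑ S ∈ B.powerset, ((Finset.powersetCard Δ u).filter (fun A => S ⊆ A)).card := by
    rw [Finset.sum_congr rfl step1, Finset.sum_comm]
    exact Finset.sum_congr rfl fun S _ => (Finset.card_filter _ _).symm
  rw [step2]
  -- split powerset by card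
  rw [Finset.powerset_card_biUnion,
    Finset.sum_biUnion (fun i _ j _ hij => Finset.pairwise_disjoint_powersetCard B hij)]
  have hzero : ∀ j ∈ Finset.range (B.card + 1), ¬ j ≤ Δ →
      ∑ S ∈ Finset.powersetCard j B,
        ((Finset.powersetCard Δ u).filter (fun A => S ⊆ A)).card = 0 := by
    intro j _ hj
    apply Finset.sum_eq_zero
    intro S hS
    rw [mem_powersetCard] at hS
    rw [Finset.card_eq_zero, Finset.filter_eq_empty_iff]
    intro A hA hSA
    rw [mem_powersetCard] at hA
    have := Finset.card_le_card hSA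
    omega
  calc ∑ j ∈ Finset.range (B.card + 1), ∑ S ∈ Finset.powersetCard j B,
        ((Finset.powersetCard Δ u).filter (fun A => S ⊆ A)).card
      = ∑ j ∈ (Finset.range (B.card + 1)).filter (· ≤ Δ), ∑ S ∈ Finset.powersetCard j B,
        ((Finset.powersetCard Δ u).filter (fun A => S ⊆ A)).card := by
        rw [Finset.sum_filter_of_ne]
        intro j hj hne
        by_contra hjΔ
        exact hne (hzero j hj hjΔ)
    _ ≤ ∑ j ∈ (Finset.range (B.card + 1)).filter (· ≤ Δ),
          B.card.choose j * (u.card - j).choose (Δ - j) := by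
        apply Finset.sum_le_sum
        intro j hj
        calc ∑ S ∈ Finset.powersetCard j B,
              ((Finset.powersetCard Δ u).filter (fun A => S ⊆ A)).card
            ≤ ∑ S ∈ Finset.powersetCard j B, (u.card - j).choose (Δ - j) := by
              apply Finset.sum_le_sum
              intro S hS
              rw [mem_powersetCard] at hS
              have := card_superset_filter_le u S (hS.1.trans hBu) Δ
              rwa [hS.2] at this
          _ = B.card.choose j * (u.card - j).choose (Δ - j) := by
              rw [Finset.sum_const, Finset.card_powersetCard, smul_eq_mul]
    _ ≤ ∑ j ∈ Finset.range (Δ + 1), B.card.choose j * (u.card - j).choose (Δ - j) := by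
        apply Finset.sum_le_sum_of_subset_of_nonneg
        · intro j hj
          simp only [mem_filter, mem_range] at hj ⊢
          omega
        · intros; positivity

private lemma heavy_card_bound (s Δ m : ℕ) (hΔs : Δ ≤ s) (hs : 1 ≤ s)
    (hm1 : Δ ≤ 2 * m) (hm2 : 2 * m ≤ Δ + 1) (B : Finset (Fin s))
    (hb : (B.card : ℝ) ≤ (s : ℝ) / 3) :
    (((Finset.powersetCard Δ (Finset.univ : Finset (Fin s))).filter
        (fun A => (Δ : ℝ) / 2 ≤ ((A ∩ B).card : ℝ))).card : ℝ) * 2 ^ m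
      ≤ (4 / 3 : ℝ) ^ Δ * (s.choose Δ) := by
  set 𝒜 := Finset.powersetCard Δ (Finset.univ : Finset (Fin s)) with h𝒜
  -- heavy sets have at least m elements in B
  have hheavy : ∀ A ∈ 𝒜.filter (fun A => (Δ : ℝ) / 2 ≤ ((A ∩ B).card : ℝ)),
      m ≤ (A ∩ B).card := by
    intro A hA
    rw [mem_filter] at hA
    have h2 : (Δ : ℝ) ≤ 2 * ((A ∩ B).card : ℝ) := by linarith [hA.2]
    have h3 : Δ ≤ 2 * (A ∩ B).card := by exact_mod_cast h2
    omega
  -- nat inequality: H * 2^m ≤ W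
  have hnat : (𝒜.filter (fun A => (Δ : ℝ) / 2 ≤ ((A ∩ B).card : ℝ))).card * 2 ^ m
      ≤ ∑ j ∈ Finset.range (Δ + 1), B.card.choose j * (s - j).choose (Δ - j) := by
    calc (𝒜.filter (fun A => (Δ : ℝ) / 2 ≤ ((A ∩ B).card : ℝ))).card * 2 ^ m
        = ∑ A ∈ 𝒜.filter (fun A => (Δ : ℝ) / 2 ≤ ((A ∩ B).card : ℝ)), 2 ^ m := by
          rw [Finset.sum_const, smul_eq_mul]
      _ ≤ ∑ A ∈ 𝒜.filter (fun A => (Δ : ℝ) / 2 ≤ ((A ∩ B).card : ℝ)), 2 ^ (A ∩ B).card := by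
          apply Finset.sum_le_sum
          intro A hA
          exact Nat.pow_le_pow_right (by norm_num) (hheavy A hA)
      _ ≤ ∑ A ∈ 𝒜, 2 ^ (A ∩ B).card := by
          apply Finset.sum_le_sum_of_subset_of_nonneg (Finset.filter_subset _ _)
          intros; positivity
      _ ≤ ∑ j ∈ Finset.range (Δ + 1), B.card.choose j * (s - j).choose (Δ - j) := by
          have := sum_two_pow_inter_le (Finset.univ : Finset (Fin s)) B (Finset.subset_univ B) Δ
          rwa [Finset.card_univ, Fintype.card_fin] at this
  -- real chain
  have hsum : (∑ j ∈ Finset.range (Δ + 1),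
      (B.card.choose j * (s - j).choose (Δ - j) : ℕ) : ℝ)
      ≤ (4 / 3 : ℝ) ^ Δ * (s.choose Δ) := by
    push_cast
    have hterm : ∀ j ∈ Finset.range (Δ + 1),
        ((B.card.choose j : ℝ) * ((s - j).choose (Δ - j) : ℝ))
          ≤ (s.choose Δ : ℝ) * (Δ.choose j : ℝ) * (1 / 3 : ℝ) ^ j := by
      intro j hj
      rw [Finset.mem_range] at hj
      have hjΔ : j ≤ Δ := by omega
      have hbs : B.card ≤ s := by
        have := B.card_le_univ
        simpa using this
      have hspos : (0:ℝ) < (s:ℝ) := by exact_mod_cast hs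
      -- C(b,j) ≤ C(s,j) * (1/3)^j
      have h1 : (B.card.choose j : ℝ) ≤ (s.choose j : ℝ) * (1 / 3 : ℝ) ^ j := by
        have hc : (B.card.choose j : ℝ) * (s : ℝ) ^ j ≤ (s.choose j : ℝ) * (B.card : ℝ) ^ j := by
          exact_mod_cast choose_mul_pow_le B.card s j hbs
        have hbj : ((B.card : ℝ)) ^ j ≤ ((s : ℝ) / 3) ^ j :=
          pow_le_pow_left₀ (by positivity) hb j
        have hsj : (0:ℝ) < (s : ℝ) ^ j := by positivity
        rw [← mul_le_mul_iff_of_pos_right hsj]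
        calc (B.card.choose j : ℝ) * (s : ℝ) ^ j ≤ (s.choose j : ℝ) * (B.card : ℝ) ^ j := hc
          _ ≤ (s.choose j : ℝ) * ((s : ℝ) / 3) ^ j := by
              apply mul_le_mul_of_nonneg_left hbj (by positivity)
          _ = (s.choose j : ℝ) * (1 / 3 : ℝ) ^ j * (s : ℝ) ^ j := by
              rw [div_pow, mul_assoc, div_eq_mul_inv, one_div]
              ring_nf
              rw [one_div]
      have h2 : (s.choose j : ℝ) * ((s - j).choose (Δ - j) : ℝ)
          = (s.choose Δ : ℝ) * (Δ.choose j : ℝ) := by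
        exact_mod_cast congrArg (Nat.cast (R := ℝ)) (Nat.choose_mul (n := s) hjΔ).symm
      calc (B.card.choose j : ℝ) * ((s - j).choose (Δ - j) : ℝ)
          ≤ (s.choose j : ℝ) * (1 / 3 : ℝ) ^ j * ((s - j).choose (Δ - j) : ℝ) := by
            apply mul_le_mul_of_nonneg_right h1 (by positivity)
        _ = (s.choose j : ℝ) * ((s - j).choose (Δ - j) : ℝ) * (1 / 3 : ℝ) ^ j := by ring
        _ = (s.choose Δ : ℝ) * (Δ.choose j : ℝ) * (1 / 3 : ℝ) ^ j := by rw [h2]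
    calc ∑ j ∈ Finset.range (Δ + 1), (B.card.choose j : ℝ) * ((s - j).choose (Δ - j) : ℝ)
        ≤ ∑ j ∈ Finset.range (Δ + 1), (s.choose Δ : ℝ) * (Δ.choose j : ℝ) * (1 / 3 : ℝ) ^ j :=
          Finset.sum_le_sum hterm
      _ = (s.choose Δ : ℝ) * ∑ j ∈ Finset.range (Δ + 1), (1 / 3 : ℝ) ^ j * 1 ^ (Δ - j) * (Δ.choose j : ℝ) := by
          rw [Finset.mul_sum]
          exact Finset.sum_congr rfl fun j _ => by ring
      _ = (s.choose Δ : ℝ) * ((1 / 3 : ℝ) + 1) ^ Δ := by rw [← add_pow]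
      _ = (4 / 3 : ℝ) ^ Δ * (s.choose Δ) := by norm_num [mul_comm]
  calc (((𝒜.filter (fun A => (Δ : ℝ) / 2 ≤ ((A ∩ B).card : ℝ))).card : ℝ)) * 2 ^ m
      = (((𝒜.filter (fun A => (Δ : ℝ) / 2 ≤ ((A ∩ B).card : ℝ))).card * 2 ^ m : ℕ) : ℝ) := by
        push_cast; ring
    _ ≤ (∑ j ∈ Finset.range (Δ + 1),
          (B.card.choose j * (s - j).choose (Δ - j) : ℕ) : ℝ) := by exact_mod_cast hnat
    _ ≤ (4 / 3 : ℝ) ^ Δ * (s.choose Δ) := hsum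

private lemma piFinset_filter_forall_card (n : ℕ) {β : Type*} [DecidableEq β] (𝒜 : Finset β)
    (P : β → Prop) [DecidablePred P] (T : Finset (Fin n)) :
    ((Fintype.piFinset (fun _ : Fin n => 𝒜)).filter (fun N => ∀ i ∈ T, P (N i))).card
      = (𝒜.filter P).card ^ T.card * 𝒜.card ^ (n - T.card) := by
  have heq : (Fintype.piFinset (fun _ : Fin n => 𝒜)).filter (fun N => ∀ i ∈ T, P (N i))
      = Fintype.piFinset (fun i : Fin n => if i ∈ T then 𝒜.filter P else 𝒜) := by
    ext N
    simp only [Finset.mem_filter, Fintype.mem_piFinset]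
    constructor
    · rintro ⟨h1, h2⟩ i
      by_cases hi : i ∈ T
      · simp [hi, Finset.mem_filter, h1 i, h2 i hi]
      · simp [hi, h1 i]
    · intro h
      constructor
      · intro i
        have := h i
        by_cases hi : i ∈ T
        · rw [if_pos hi, Finset.mem_filter] at this; exact this.1
        · rwa [if_neg hi] at this
      · intro i hi
        have := h i
        rw [if_pos hi, Finset.mem_filter] at this
        exact this.2
  rw [heq, Fintype.card_piFinset]
  have : ∀ i : Fin n, (if i ∈ T then 𝒜.filter P else 𝒜).card
      = if i ∈ T then (𝒜.filter P).card else 𝒜.card := fun i => apply_ite Finset.card _ _ _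
  rw [Finset.prod_congr rfl (fun i _ => this i)]
  rw [Finset.prod_ite]
  simp only [Finset.prod_const]
  have h1 : Finset.univ.filter (fun i => i ∈ T) = T := by
    ext i; simp
  have h2 : (Finset.univ.filter (fun i => ¬ i ∈ T)).card = n - T.card := by
    have he : Finset.univ.filter (fun i => ¬ i ∈ T) = Finset.univ \ T := by
      ext i; simp
    rw [he, Finset.card_sdiff_of_subset (Finset.subset_univ T)]
    simp
  rw [h1, h2]

private lemma count_per_B (n d : ℕ) {β : Type*} [DecidableEq β] (𝒜 : Finset β)
    (P : β → Prop) [DecidablePred P] :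
    ((Fintype.piFinset (fun _ : Fin n => 𝒜)).filter
        (fun N => d ≤ (Finset.univ.filter (fun i : Fin n => P (N i))).card)).card
      ≤ n.choose d * ((𝒜.filter P).card ^ d * 𝒜.card ^ (n - d)) := by
  have hsub : (Fintype.piFinset (fun _ : Fin n => 𝒜)).filter
        (fun N => d ≤ (Finset.univ.filter (fun i : Fin n => P (N i))).card)
      ⊆ (Finset.powersetCard d (Finset.univ : Finset (Fin n))).biUnion
          (fun T => (Fintype.piFinset (fun _ : Fin n => 𝒜)).filter
            (fun N => ∀ i ∈ T, P (N i))) := by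
    intro N hN
    rw [Finset.mem_filter] at hN
    obtain ⟨T, hT, hTcard⟩ := Finset.exists_subset_card_eq hN.2
    rw [Finset.mem_biUnion]
    refine ⟨T, ?_, ?_⟩
    · rw [Finset.mem_powersetCard]
      exact ⟨Finset.subset_univ T, hTcard⟩
    · rw [Finset.mem_filter]
      refine ⟨hN.1, fun i hi => ?_⟩
      have := hT hi
      rw [Finset.mem_filter] at this
      exact this.2
  calc ((Fintype.piFinset (fun _ : Fin n => 𝒜)).filter
        (fun N => d ≤ (Finset.univ.filter (fun i : Fin n => P (N i))).card)).card
      ≤ ((Finset.powersetCard d (Finset.univ : Finset (Fin n))).biUnion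
          (fun T => (Fintype.piFinset (fun _ : Fin n => 𝒜)).filter
            (fun N => ∀ i ∈ T, P (N i)))).card := Finset.card_le_card hsub
    _ ≤ ∑ T ∈ Finset.powersetCard d (Finset.univ : Finset (Fin n)),
          ((Fintype.piFinset (fun _ : Fin n => 𝒜)).filter
            (fun N => ∀ i ∈ T, P (N i))).card := Finset.card_biUnion_le
    _ = ∑ T ∈ Finset.powersetCard d (Finset.univ : Finset (Fin n)),
          (𝒜.filter P).card ^ d * 𝒜.card ^ (n - d) := by
        apply Finset.sum_congr rfl
        intro T hT
        rw [Finset.mem_powersetCard] at hT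
        rw [piFinset_filter_forall_card, hT.2]
    _ = n.choose d * ((𝒜.filter P).card ^ d * 𝒜.card ^ (n - d)) := by
        rw [Finset.sum_const, Finset.card_powersetCard, smul_eq_mul, Finset.card_univ,
          Fintype.card_fin]

private lemma log_nine_eighth : (1 : ℝ) / 15 < Real.log 2 - 2 * Real.log (4 / 3) := by
  have l43 : Real.log (4 / 3) = 2 * Real.log 2 - Real.log 3 := by
    rw [show (4 / 3 : ℝ) = 2 ^ 2 / 3 by norm_num,
      Real.log_div (by norm_num) (by norm_num), Real.log_pow]
    push_cast; ring
  have l98 : Real.log (9 / 8 : ℝ) = 2 * Real.log 3 - 3 * Real.log 2 := by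
    rw [show (9 / 8 : ℝ) = 3 ^ 2 / 2 ^ 3 by norm_num,
      Real.log_div (by positivity) (by positivity), Real.log_pow, Real.log_pow]
    push_cast; ring
  have key : (1 : ℝ) / 15 < Real.log (9 / 8) := by
    rw [show (1 : ℝ) / 15 = Real.log (Real.exp (1 / 15)) by rw [Real.log_exp]]
    apply Real.log_lt_log (Real.exp_pos _)
    have h1 : (1 : ℝ) - 1 / 15 ≤ Real.exp (-(1 / 15)) := by
      have := Real.add_one_le_exp (-(1 / 15) : ℝ)
      linarith
    have hpos : (0 : ℝ) < Real.exp (-(1 / 15)) := Real.exp_pos _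
    have h2 : Real.exp (1 / 15 : ℝ) ≤ 15 / 14 := by
      rw [show (1 / 15 : ℝ) = -(-(1 / 15)) by ring, Real.exp_neg]
      rw [inv_le_comm₀ (Real.exp_pos _) (by norm_num)]
      linarith
    linarith
  linarith [key, l43, l98]

private lemma analytic_core (n d s Δ m : ℕ) (hn : 1 ≤ n) (hd : 1 ≤ d) (hs : 1 ≤ s)
    (hm1 : Δ ≤ 2 * m)
    (hΔ30 : 30 * ((s : ℝ) * Real.log 2 / (d : ℝ) + Real.log n) ≤ (Δ : ℝ)) :
    (2 : ℝ) ^ s * (n : ℝ) ^ d * ((4 / 3 : ℝ) ^ Δ / 2 ^ m) ^ d < 1 := by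
  have hdpos : (0 : ℝ) < d := by exact_mod_cast hd
  have hnpos : (0 : ℝ) < n := by exact_mod_cast hn
  have hspos : (0 : ℝ) < s := by exact_mod_cast hs
  have hlog2 : (0 : ℝ) < Real.log 2 := Real.log_pos (by norm_num)
  have hlogn : (0 : ℝ) ≤ Real.log n := Real.log_nonneg (by exact_mod_cast hn)
  obtain ⟨R, hR⟩ : ∃ R : ℝ, R = (s : ℝ) * Real.log 2 + (d : ℝ) * Real.log n := ⟨_, rfl⟩
  have hs1 : (1 : ℝ) ≤ (s : ℝ) := by exact_mod_cast hs
  have hRpos : 0 < R := by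
    have h1 : 1 * Real.log 2 ≤ (s : ℝ) * Real.log 2 :=
      mul_le_mul_of_nonneg_right hs1 hlog2.le
    have h2 : 0 ≤ (d : ℝ) * Real.log n := mul_nonneg hdpos.le hlogn
    rw [hR]; linarith
  have hdΔ : 30 * R ≤ (d : ℝ) * Δ := by
    have h := mul_le_mul_of_nonneg_left hΔ30 hdpos.le
    have he : (d : ℝ) * (30 * ((s : ℝ) * Real.log 2 / (d : ℝ) + Real.log n)) = 30 * R := by
      rw [hR]; field_simp
    rw [he] at h; exact h
  obtain ⟨c, hc⟩ : ∃ c : ℝ, c = Real.log 2 / 2 - Real.log (4 / 3) := ⟨_, rfl⟩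
  have hc30 : 1 / 30 < c := by
    have := log_nine_eighth
    rw [hc]; linarith
  have hcpos : 0 < c := by linarith
  have h3 : R < (d : ℝ) * (Δ : ℝ) * c := by
    have ha : 30 * R * c ≤ (d : ℝ) * (Δ : ℝ) * c :=
      mul_le_mul_of_nonneg_right hdΔ hcpos.le
    have hb : 30 * R * (1 / 30) < 30 * R * c :=
      mul_lt_mul_of_pos_left hc30 (by linarith)
    nlinarith
  have hmain : (s : ℝ) * Real.log 2 + (d : ℝ) * Real.log n
      + (d : ℝ) * ((Δ : ℝ) * Real.log (4 / 3) - (m : ℝ) * Real.log 2) < 0 := by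
    have hm' : (Δ : ℝ) / 2 ≤ (m : ℝ) := by
      have : (Δ : ℝ) ≤ 2 * m := by exact_mod_cast hm1
      linarith
    have hm2 : (Δ : ℝ) / 2 * Real.log 2 ≤ (m : ℝ) * Real.log 2 :=
      mul_le_mul_of_nonneg_right hm' hlog2.le
    have hd1 : (d : ℝ) * ((Δ : ℝ) * Real.log (4 / 3) - (m : ℝ) * Real.log 2)
        ≤ (d : ℝ) * ((Δ : ℝ) * Real.log (4 / 3) - (Δ : ℝ) / 2 * Real.log 2) :=
      mul_le_mul_of_nonneg_left (by linarith) hdpos.le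
    have he : (d : ℝ) * ((Δ : ℝ) * Real.log (4 / 3) - (Δ : ℝ) / 2 * Real.log 2)
        = -((d : ℝ) * (Δ : ℝ) * c) := by rw [hc]; ring
    rw [he] at hd1
    rw [hR] at h3
    linarith
  have hLpos : (0 : ℝ) < (2 : ℝ) ^ s * (n : ℝ) ^ d * ((4 / 3 : ℝ) ^ Δ / 2 ^ m) ^ d := by
    positivity
  have hlogL : Real.log ((2 : ℝ) ^ s * (n : ℝ) ^ d * ((4 / 3 : ℝ) ^ Δ / 2 ^ m) ^ d)
      = (s : ℝ) * Real.log 2 + (d : ℝ) * Real.log n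
        + (d : ℝ) * ((Δ : ℝ) * Real.log (4 / 3) - (m : ℝ) * Real.log 2) := by
    have e1 : Real.log ((4 / 3 : ℝ) ^ Δ / 2 ^ m)
        = (Δ : ℝ) * Real.log (4 / 3) - (m : ℝ) * Real.log 2 := by
      rw [Real.log_div (by positivity) (by positivity), Real.log_pow, Real.log_pow]
    rw [Real.log_mul (by positivity) (by positivity), Real.log_mul (by positivity) (by positivity),
      Real.log_pow, Real.log_pow, Real.log_pow, e1]
  calc (2 : ℝ) ^ s * (n : ℝ) ^ d * ((4 / 3 : ℝ) ^ Δ / 2 ^ m) ^ d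
      = Real.exp (Real.log ((2 : ℝ) ^ s * (n : ℝ) ^ d * ((4 / 3 : ℝ) ^ Δ / 2 ^ m) ^ d)) :=
        (Real.exp_log hLpos).symm
    _ < Real.exp 0 := Real.exp_lt_exp.2 (by rw [hlogL]; exact hmain)
    _ = 1 := Real.exp_zero


/-- Existence of a sparse bipartite graph (Lemma "sparselemma"): for `n, d ≥ 1` and
`1 ≤ s ≤ n`, with `Δ = min(⌈2s/3⌉, ⌈30((s ln 2)/d + ln n)⌉)`, there is an assignment of a
`Δ`-element neighborhood `N(vᵢ) ⊆ Q` (`|Q| = s`) to each of `n` vertices such that for every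
`B ⊆ Q` with `|B| < s/3`, fewer than `d` vertices have at least `Δ/2` neighbors in `B`. -/
theorem exists_sparse_bipartite_graph (n d s : ℕ) (hn : 1 ≤ n) (hd : 1 ≤ d)
    (hs1 : 1 ≤ s) (hsn : s ≤ n) :
    ∀ Δ : ℕ, Δ = min ⌈(2 * (s : ℝ)) / 3⌉₊
        ⌈30 * (((s : ℝ) * Real.log 2) / (d : ℝ) + Real.log n)⌉₊ →
      ∃ N : Fin n → Finset (Fin s),
        (∀ i : Fin n, (N i).card = Δ) ∧
        ∀ B : Finset (Fin s), (B.card : ℝ) < (s : ℝ) / 3 →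
          ((Finset.univ.filter
              (fun i : Fin n => ((Δ : ℝ) / 2 ≤ ((N i ∩ B).card : ℝ)))).card : ℝ) < d := by
  intro Δ hΔ
  have hΔs : Δ ≤ s := by
    have h1 : Δ ≤ ⌈(2 * (s : ℝ)) / 3⌉₊ := hΔ ▸ min_le_left _ _
    have h2 : ⌈(2 * (s : ℝ)) / 3⌉₊ ≤ s := by
      apply Nat.ceil_le.2
      have : (0 : ℝ) ≤ (s : ℝ) := Nat.cast_nonneg s
      push_cast
      linarith
    omega
  obtain ⟨A0, _, hA0card⟩ := Finset.exists_subset_card_eq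
    (show Δ ≤ (Finset.univ : Finset (Fin s)).card by simpa using hΔs)
  -- degenerate case: more than n vertices required
  by_cases hdn : n < d
  · refine ⟨fun _ => A0, fun _ => hA0card, fun B _ => ?_⟩
    have hle : (Finset.univ.filter
        (fun i : Fin n => ((Δ : ℝ) / 2 ≤ (((fun _ => A0) i ∩ B).card : ℝ)))).card ≤ n := by
      calc (Finset.univ.filter _).card ≤ (Finset.univ : Finset (Fin n)).card :=
            Finset.card_filter_le _ _
        _ = n := by simp
    have : (Finset.univ.filter
        (fun i : Fin n => ((Δ : ℝ) / 2 ≤ (((fun _ => A0) i ∩ B).card : ℝ)))).card < d := by omega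
    exact_mod_cast this
  push_neg at hdn
  -- trivial case : Δ ≥ 2s/3
  by_cases hcase : (s : ℝ) / 3 ≤ (Δ : ℝ) / 2
  · refine ⟨fun _ => A0, fun _ => hA0card, fun B hB => ?_⟩
    have hempty : (Finset.univ.filter
        (fun i : Fin n => ((Δ : ℝ) / 2 ≤ (((fun _ => A0) i ∩ B).card : ℝ)))) = ∅ := by
      rw [Finset.filter_eq_empty_iff]
      intro i _
      simp only
      push_neg
      have h1 : ((A0 ∩ B).card : ℝ) ≤ (B.card : ℝ) := by
        exact_mod_cast Finset.card_le_card (Finset.inter_subset_right)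
      linarith
    rw [hempty]
    simp only [Finset.card_empty, Nat.cast_zero]
    exact_mod_cast hd
  -- hard case
  push_neg at hcase
  have hΔ30 : 30 * (((s : ℝ) * Real.log 2) / (d : ℝ) + Real.log n) ≤ (Δ : ℝ) := by
    rcases min_cases ⌈(2 * (s : ℝ)) / 3⌉₊
        ⌈30 * (((s : ℝ) * Real.log 2) / (d : ℝ) + Real.log n)⌉₊ with ⟨h1, h2⟩ | ⟨h1, h2⟩
    · exfalso
      have : (2 * (s : ℝ)) / 3 ≤ (Δ : ℝ) := by
        rw [hΔ, h1]; exact Nat.le_ceil _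
      linarith
    · have : 30 * (((s : ℝ) * Real.log 2) / (d : ℝ) + Real.log n)
          ≤ (⌈30 * (((s : ℝ) * Real.log 2) / (d : ℝ) + Real.log n)⌉₊ : ℝ) := Nat.le_ceil _
      rw [hΔ, h1]
      exact this
  set m : ℕ := (Δ + 1) / 2 with hm
  have hm1 : Δ ≤ 2 * m := by omega
  have hm2 : 2 * m ≤ Δ + 1 := by omega
  set 𝒜 : Finset (Finset (Fin s)) := Finset.powersetCard Δ (Finset.univ : Finset (Fin s))
    with h𝒜
  set Ω : Finset (Fin n → Finset (Fin s)) := Fintype.piFinset (fun _ : Fin n => 𝒜) with hΩ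
  set K : ℕ := s.choose Δ with hK
  have hKpos : 0 < K := Nat.choose_pos hΔs
  have h𝒜card : 𝒜.card = K := by
    rw [h𝒜, Finset.card_powersetCard]
    simp [hK]
  have hΩcard : Ω.card = K ^ n := by
    rw [hΩ, Fintype.card_piFinset]
    simp [h𝒜card]
  set badB : Finset (Finset (Fin s)) :=
    Finset.univ.filter (fun B : Finset (Fin s) => (B.card : ℝ) < (s : ℝ) / 3) with hbadB
  set Bad : Finset (Fin n → Finset (Fin s)) :=
    Ω.filter (fun N => ∃ B ∈ badB,
      d ≤ (Finset.univ.filter (fun i : Fin n => ((Δ : ℝ) / 2 ≤ ((N i ∩ B).card : ℝ)))).card)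
    with hBad
  -- the crucial cardinality bound
  have hkey : Bad.card < Ω.card := by
    -- step 1 : union bound over B
    have hsub : Bad ⊆ badB.biUnion (fun B => Ω.filter (fun N =>
        d ≤ (Finset.univ.filter
          (fun i : Fin n => ((Δ : ℝ) / 2 ≤ ((N i ∩ B).card : ℝ)))).card)) := by
      intro N hN
      rw [hBad, Finset.mem_filter] at hN
      obtain ⟨hNΩ, B, hBmem, hBcount⟩ := hN
      rw [Finset.mem_biUnion]
      exact ⟨B, hBmem, Finset.mem_filter.2 ⟨hNΩ, hBcount⟩⟩
    have hstep1 : Bad.card ≤ ∑ B ∈ badB, (Ω.filter (fun N =>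
        d ≤ (Finset.univ.filter
          (fun i : Fin n => ((Δ : ℝ) / 2 ≤ ((N i ∩ B).card : ℝ)))).card)).card :=
      le_trans (Finset.card_le_card hsub) Finset.card_biUnion_le
    -- step 2 : per-B bound, in the reals
    have hstep2 : ∀ B ∈ badB, ((Ω.filter (fun N =>
        d ≤ (Finset.univ.filter
          (fun i : Fin n => ((Δ : ℝ) / 2 ≤ ((N i ∩ B).card : ℝ)))).card)).card : ℝ)
        ≤ (n : ℝ) ^ d * ((4 / 3 : ℝ) ^ Δ / 2 ^ m) ^ d * (K : ℝ) ^ n := by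
      intro B hBmem
      have hBsmall : (B.card : ℝ) < (s : ℝ) / 3 := by
        rw [hbadB, Finset.mem_filter] at hBmem
        exact hBmem.2
      have hcount := count_per_B n d 𝒜 (fun A => ((Δ : ℝ) / 2 ≤ ((A ∩ B).card : ℝ)))
      set H : ℕ := (𝒜.filter (fun A => ((Δ : ℝ) / 2 ≤ ((A ∩ B).card : ℝ)))).card with hH
      have hHb : (H : ℝ) * 2 ^ m ≤ (4 / 3 : ℝ) ^ Δ * (K : ℝ) := by
        have := heavy_card_bound s Δ m hΔs hs1 hm1 hm2 B (le_of_lt hBsmall)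
        rw [← h𝒜, ← hH] at this
        rw [hK]
        exact this
      have hHb2 : (H : ℝ) ≤ (4 / 3 : ℝ) ^ Δ / 2 ^ m * (K : ℝ) := by
        rw [div_mul_eq_mul_div, le_div_iff₀ (by positivity : (0:ℝ) < (2:ℝ) ^ m)]
        linarith
      calc ((Ω.filter (fun N =>
            d ≤ (Finset.univ.filter
              (fun i : Fin n => ((Δ : ℝ) / 2 ≤ ((N i ∩ B).card : ℝ)))).card)).card : ℝ)
          ≤ ((n.choose d : ℕ) : ℝ) * ((H : ℝ) ^ d * ((𝒜.card : ℕ) : ℝ) ^ (n - d)) := by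
            exact_mod_cast hcount
        _ ≤ (n : ℝ) ^ d * (((4 / 3 : ℝ) ^ Δ / 2 ^ m * (K : ℝ)) ^ d * (K : ℝ) ^ (n - d)) := by
            apply mul_le_mul
            · exact_mod_cast Nat.choose_le_pow n d
            · rw [h𝒜card]
              exact mul_le_mul_of_nonneg_right (pow_le_pow_left₀ (by positivity) hHb2 d)
                (by positivity)
            · positivity
            · positivity
        _ = (n : ℝ) ^ d * ((4 / 3 : ℝ) ^ Δ / 2 ^ m) ^ d * ((K : ℝ) ^ d * (K : ℝ) ^ (n - d)) := by
            rw [mul_pow]; ring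
        _ = (n : ℝ) ^ d * ((4 / 3 : ℝ) ^ Δ / 2 ^ m) ^ d * (K : ℝ) ^ n := by
            rw [← pow_add, Nat.add_sub_cancel' hdn]
    -- step 3 : number of bad B's
    have hbadBcard : (badB.card : ℝ) ≤ (2 : ℝ) ^ s := by
      have h1 : badB.card ≤ 2 ^ s := by
        calc badB.card ≤ (Finset.univ : Finset (Finset (Fin s))).card :=
              Finset.card_filter_le _ _
          _ = 2 ^ s := by rw [Finset.card_univ, Fintype.card_finset, Fintype.card_fin]
      exact_mod_cast h1
    -- assemble
    have hreal : (Bad.card : ℝ) < (K : ℝ) ^ n := by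
      have hcore := analytic_core n d s Δ m hn hd hs1 hm1 hΔ30
      have hx : (0:ℝ) ≤ (n : ℝ) ^ d * ((4 / 3 : ℝ) ^ Δ / 2 ^ m) ^ d * (K : ℝ) ^ n := by
        positivity
      calc (Bad.card : ℝ)
          ≤ ∑ B ∈ badB, ((Ω.filter (fun N =>
              d ≤ (Finset.univ.filter
                (fun i : Fin n => ((Δ : ℝ) / 2 ≤ ((N i ∩ B).card : ℝ)))).card)).card : ℝ) := by
            exact_mod_cast hstep1
        _ ≤ ∑ B ∈ badB, (n : ℝ) ^ d * ((4 / 3 : ℝ) ^ Δ / 2 ^ m) ^ d * (K : ℝ) ^ n :=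
            Finset.sum_le_sum hstep2
        _ = (badB.card : ℝ) * ((n : ℝ) ^ d * ((4 / 3 : ℝ) ^ Δ / 2 ^ m) ^ d * (K : ℝ) ^ n) := by
            rw [Finset.sum_const, nsmul_eq_mul]
        _ ≤ (2 : ℝ) ^ s * ((n : ℝ) ^ d * ((4 / 3 : ℝ) ^ Δ / 2 ^ m) ^ d * (K : ℝ) ^ n) :=
            mul_le_mul_of_nonneg_right hbadBcard hx
        _ = ((2 : ℝ) ^ s * (n : ℝ) ^ d * ((4 / 3 : ℝ) ^ Δ / 2 ^ m) ^ d) * (K : ℝ) ^ n := by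
            ring
        _ < 1 * (K : ℝ) ^ n := by
            apply mul_lt_mul_of_pos_right hcore
            have : (0:ℝ) < (K : ℝ) := by exact_mod_cast hKpos
            positivity
        _ = (K : ℝ) ^ n := by ring
    have hlt : Bad.card < K ^ n := by exact_mod_cast hreal
    exact hlt.trans_eq hΩcard.symm
  -- extract a good N
  have hnonempty : (Ω \ Bad).Nonempty := by
    rw [← Finset.card_pos, Finset.card_sdiff_of_subset (Finset.filter_subset _ _)]
    exact Nat.sub_pos_of_lt hkey
  obtain ⟨N, hN⟩ := hnonempty
  rw [Finset.mem_sdiff] at hN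
  obtain ⟨hNΩ, hNBad⟩ := hN
  refine ⟨N, ?_, ?_⟩
  · intro i
    have := Fintype.mem_piFinset.1 hNΩ i
    rw [h𝒜, Finset.mem_powersetCard] at this
    exact this.2
  · intro B hB
    by_contra hge
    push_neg at hge
    have hged : d ≤ (Finset.univ.filter
        (fun i : Fin n => ((Δ : ℝ) / 2 ≤ ((N i ∩ B).card : ℝ)))).card := by
      exact_mod_cast hge
    apply hNBad
    rw [hBad, Finset.mem_filter]
    exact ⟨hNΩ, B, Finset.mem_filter.2 ⟨Finset.mem_univ _, hB⟩, hged⟩
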